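/- Let β, γ : Fin n → ℝ be vectors with all entries in [0,1]. There exists an n×n doubly substochastic matrix D with β = Dγ if and only if there exist finitely many coefficients λ_0, …, λ_{m−1} ∈ [0,1] with ∑_i λ_i ≤ 1 and n×n partial permutation matrices P_0, …, P_{m−1} such that β = ∑_i λ_i P_i γ. -/
import Mathlib

/-- A square real matrix is doubly substochastic if all entries are nonnegative and
every row sum and every column sum is at most 1. -/
def DoublySubstochastic {m : Type*} [Fintype m] (D : Matrix m m ℝ) : Prop :=
  (∀ i j, 0 ≤ D i j) ∧ (∀ i, ∑ j, D i j ≤ 1) ∧ (∀ j, ∑ i, D i j ≤ 1)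

/-- A partial permutation matrix: a 0–1 matrix with at most one 1 in each row
and in each column. -/
def IsPartialPermMatrix {m : Type*} [Fintype m] (P : Matrix m m ℝ) : Prop :=
  (∀ i j, P i j = 0 ∨ P i j = 1) ∧ (∀ i, ∑ j, P i j ≤ 1) ∧ (∀ j, ∑ i, P i j ≤ 1)

open Finset Matrix

/-- For vectors `β, γ : Fin n → ℝ` with entries in `[0,1]`, there is a doubly
substochastic matrix `D` with `β = Dγ` iff `β = ∑ i, λ_i • (P_i γ)` for finitely
many coefficients `λ_i ∈ [0,1]` with `∑ λ_i ≤ 1` and partial permutation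
matrices `P_i`. -/
theorem exists_doublySubstochastic_iff_subconvex_partialPerms {n : ℕ} (β γ : Fin n → ℝ)
    (hβ : ∀ i, 0 ≤ β i ∧ β i ≤ 1) (hγ : ∀ i, 0 ≤ γ i ∧ γ i ≤ 1) :
    (∃ D : Matrix (Fin n) (Fin n) ℝ, DoublySubstochastic D ∧ D.mulVec γ = β) ↔
      ∃ (m : ℕ) (lam : Fin m → ℝ) (P : Fin m → Matrix (Fin n) (Fin n) ℝ),
        (∀ i, 0 ≤ lam i ∧ lam i ≤ 1) ∧ (∑ i, lam i ≤ 1) ∧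
        (∀ i, IsPartialPermMatrix (P i)) ∧
        β = ∑ i, lam i • (P i).mulVec γ := by
  constructor
  · rintro ⟨D, ⟨hpos, hrow, hcol⟩, rfl⟩
    -- build a doubly stochastic matrix on `Fin n ⊕ Fin n`
    set M : Matrix (Fin n ⊕ Fin n) (Fin n ⊕ Fin n) ℝ := fun p q =>
      match p, q with
      | Sum.inl i, Sum.inl j => D i j
      | Sum.inl i, Sum.inr j => if i = j then 1 - ∑ k, D i k else 0
      | Sum.inr i, Sum.inl j => if i = j then 1 - ∑ k, D k j else 0
      | Sum.inr i, Sum.inr j => D j i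
      with hMdef
    have hM : M ∈ doublyStochastic ℝ (Fin n ⊕ Fin n) := by
      rw [mem_doublyStochastic_iff_sum]
      refine ⟨?_, ?_, ?_⟩
      · rintro (i | i) (j | j) <;> simp only [hMdef]
        · exact hpos i j
        · split
          · linarith [hrow i]
          · exact le_refl 0
        · split
          · linarith [hcol j]
          · exact le_refl 0
        · exact hpos j i
      · rintro (i | i)
        · rw [Fintype.sum_sum_type]
          simp only [hMdef, Finset.sum_ite_eq, Finset.mem_univ, if_true]
          ring
        · rw [Fintype.sum_sum_type]
          simp only [hMdef, Finset.sum_ite_eq, Finset.mem_univ, if_true]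
          ring
      · rintro (j | j)
        · rw [Fintype.sum_sum_type]
          simp only [hMdef]
          rw [Finset.sum_ite_eq' Finset.univ j (fun i => 1 - ∑ k, D k j)]
          simp only [Finset.mem_univ, if_true]
          ring
        · rw [Fintype.sum_sum_type]
          simp only [hMdef]
          rw [Finset.sum_ite_eq' Finset.univ j (fun i => 1 - ∑ k, D i k)]
          simp only [Finset.mem_univ, if_true]
          ring
    obtain ⟨w, hw0, hw1, hwM⟩ := exists_eq_sum_perm_of_mem_doublyStochastic hM
    set m := Fintype.card (Equiv.Perm (Fin n ⊕ Fin n)) with hm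
    obtain e := (Fintype.equivFin (Equiv.Perm (Fin n ⊕ Fin n))).symm
    refine ⟨m, fun k => w (e k), fun k i j => (e k).permMatrix ℝ (Sum.inl i) (Sum.inl j),
      ?_, ?_, ?_, ?_⟩
    · intro k
      refine ⟨hw0 _, ?_⟩
      calc w (e k) ≤ ∑ σ, w σ := Finset.single_le_sum (fun σ _ => hw0 σ) (Finset.mem_univ _)
        _ = 1 := hw1
    · rw [Fintype.sum_equiv e (fun k => w (e k)) w (fun k => rfl), hw1]
    · intro k
      set σ := e k with hσ
      have entry : ∀ i j : Fin n, σ.permMatrix ℝ (Sum.inl i) (Sum.inl j) =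
          if σ (Sum.inl i) = Sum.inl j then 1 else 0 := by
        intro i j
        simp [Equiv.Perm.permMatrix, PEquiv.toMatrix_apply, Equiv.toPEquiv_apply,
          Option.mem_def, eq_comm]
      refine ⟨?_, ?_, ?_⟩
      · intro i j
        show Equiv.Perm.permMatrix ℝ (e k) (Sum.inl i) (Sum.inl j) = 0 ∨
          Equiv.Perm.permMatrix ℝ (e k) (Sum.inl i) (Sum.inl j) = 1
        rw [show (e k) = σ from rfl, entry]
        split
        · right; rfl
        · left; rfl
      · intro i
        show ∑ j : Fin n, Equiv.Perm.permMatrix ℝ (e k) (Sum.inl i) (Sum.inl j) ≤ 1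
        simp_rw [show (e k) = σ from rfl, entry]
        rcases h : σ (Sum.inl i) with a | a
        · simp only [Sum.inl.injEq]
          rw [Finset.sum_ite_eq Finset.univ a (fun _ => (1:ℝ))]
          simp
        · simp
      · intro j
        show ∑ i : Fin n, Equiv.Perm.permMatrix ℝ (e k) (Sum.inl i) (Sum.inl j) ≤ 1
        simp_rw [show (e k) = σ from rfl, entry]
        have key : ∀ i₁ i₂ : Fin n, σ (Sum.inl i₁) = Sum.inl j →
            σ (Sum.inl i₂) = Sum.inl j → i₁ = i₂ := fun i₁ i₂ h1 h2 =>
          Sum.inl_injective (σ.injective (h1.trans h2.symm))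
        by_cases hex : ∃ i : Fin n, σ (Sum.inl i) = Sum.inl j
        · obtain ⟨i0, hi0⟩ := hex
          have : ∀ i : Fin n, (if σ (Sum.inl i) = Sum.inl j then (1:ℝ) else 0) =
              if i = i0 then 1 else 0 := by
            intro i
            by_cases hii : i = i0
            · subst hii; simp [hi0]
            · rw [if_neg hii, if_neg (fun hc => hii (key i i0 hc hi0))]
          simp_rw [this]
          rw [Finset.sum_ite_eq' Finset.univ i0 (fun _ => (1:ℝ))]
          simp
        · push_neg at hex
          have : ∀ i : Fin n, (if σ (Sum.inl i) = Sum.inl j then (1:ℝ) else 0) = 0 := by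
            intro i; rw [if_neg (hex i)]
          simp [this]
    · -- the main identity
      funext i
      have hD : ∀ i j, D i j = ∑ σ, w σ * σ.permMatrix ℝ (Sum.inl i) (Sum.inl j) := by
        intro i j
        have := congrFun (congrFun hwM (Sum.inl i)) (Sum.inl j)
        simp only [Matrix.sum_apply, Matrix.smul_apply, smul_eq_mul] at this
        exact this.symm
      simp only [Finset.sum_apply, Pi.smul_apply, smul_eq_mul, Matrix.mulVec, dotProduct]
      calc ∑ j, D i j * γ j
          = ∑ j, (∑ σ, w σ * σ.permMatrix ℝ (Sum.inl i) (Sum.inl j)) * γ j := by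
            simp_rw [← hD]
        _ = ∑ σ, w σ * ∑ j, σ.permMatrix ℝ (Sum.inl i) (Sum.inl j) * γ j := by
            simp_rw [Finset.sum_mul, Finset.mul_sum, mul_assoc]
            exact Finset.sum_comm
        _ = ∑ k, w (e k) * ∑ j, (e k).permMatrix ℝ (Sum.inl i) (Sum.inl j) * γ j := by
            exact (Fintype.sum_equiv e _ _ (fun k => rfl)).symm
  · rintro ⟨m, lam, P, hlam, hsum, hP, rfl⟩
    refine ⟨∑ k, lam k • P k, ⟨?_, ?_, ?_⟩, ?_⟩
    · intro i j
      simp only [Matrix.sum_apply, Matrix.smul_apply, smul_eq_mul]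
      refine Finset.sum_nonneg fun k _ => mul_nonneg (hlam k).1 ?_
      rcases (hP k).1 i j with h | h <;> rw [h] <;> norm_num
    · intro i
      simp only [Matrix.sum_apply, Matrix.smul_apply, smul_eq_mul]
      rw [Finset.sum_comm]
      calc ∑ k, ∑ j, lam k * P k i j
          = ∑ k, lam k * ∑ j, P k i j := by simp_rw [Finset.mul_sum]
        _ ≤ ∑ k, lam k * 1 :=
            Finset.sum_le_sum fun k _ => mul_le_mul_of_nonneg_left ((hP k).2.1 i) (hlam k).1
        _ = ∑ k, lam k := by simp
        _ ≤ 1 := hsum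
    · intro j
      simp only [Matrix.sum_apply, Matrix.smul_apply, smul_eq_mul]
      rw [Finset.sum_comm]
      calc ∑ k, ∑ i, lam k * P k i j
          = ∑ k, lam k * ∑ i, P k i j := by simp_rw [Finset.mul_sum]
        _ ≤ ∑ k, lam k * 1 :=
            Finset.sum_le_sum fun k _ => mul_le_mul_of_nonneg_left ((hP k).2.2 j) (hlam k).1
        _ = ∑ k, lam k := by simp
        _ ≤ 1 := hsum
    · funext i
      simp only [Matrix.mulVec, dotProduct, Finset.sum_apply, Matrix.sum_apply,
        Matrix.smul_apply, Pi.smul_apply, smul_eq_mul]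
      simp_rw [Finset.sum_mul, Finset.mul_sum, mul_assoc]
      exact Finset.sum_comm
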